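/- Let B be a complete Boolean algebra, B₁, B₂ ⋖ B complete subalgebras, φ₀ : B₁ → B₂ an isomorphism, and let Am(B,φ₀) be the amalgamation, i.e., the complete Boolean algebra generated by pairs (b′,b″) ∈ B × B with φ₀(π₁(b′)) · π₂(b″) ≠ 0 (π_j the projection B → B_j), with the product order. Then the maps e₁(b) = (b,1) and e₂(b) = (1,b) are complete embeddings of B into Am(B,φ₀). -/

import Mathlib

open Set

variable {B : Type*}

/-- `S` is a complete subalgebra of the complete Boolean algebra `B`:
closed under arbitrary suprema and complements. -/
def IsCompleteSubalgebra [CompleteBooleanAlgebra B] (S : Set B) : Prop :=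
  (∀ T : Set B, T ⊆ S → sSup T ∈ S) ∧ (∀ a ∈ S, aᶜ ∈ S)

/-- The projection onto a complete subalgebra `S`:
`π(b) = inf {a ∈ S : b ≤ a}`. -/
def proj [CompleteBooleanAlgebra B] (S : Set B) (b : B) : B :=
  sInf {a ∈ S | b ≤ a}

/-- The amalgamation `Am(B,φ₀)` of `B` over an isomorphism `φ₀ : B₁ → B₂`:
the set of pairs `(b',b'') ∈ B × B` with `φ₀(π₁(b')) ⊓ π₂(b'') ≠ ⊥`,
with the product order. -/
def Amal [CompleteBooleanAlgebra B] (S₁ S₂ : Set B) (φ : B → B) :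
    Set (B × B) :=
  {c | φ (proj S₁ c.1) ⊓ proj S₂ c.2 ≠ ⊥}

/-- Compatibility in the amalgamation: a common extension inside `Am`. -/
def AmalCompat [CompleteBooleanAlgebra B] (Am : Set (B × B)) (c d : B × B) :
    Prop :=
  ∃ e ∈ Am, e ≤ c ∧ e ≤ d

/-- `φ` restricts to an isomorphism of `S₁` onto `S₂`. -/
def IsSubalgIso [CompleteBooleanAlgebra B] (S₁ S₂ : Set B) (φ : B → B) :
    Prop :=
  φ '' S₁ = S₂ ∧ (∀ a ∈ S₁, ∀ b ∈ S₁, (φ a ≤ φ b ↔ a ≤ b))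

section helper
variable [CompleteBooleanAlgebra B] {S S₁ S₂ : Set B} {φ : B → B}

lemma CS.bot_mem (h : IsCompleteSubalgebra S) : (⊥ : B) ∈ S := by
  have := h.1 ∅ (empty_subset S); simpa using this

lemma CS.top_mem (h : IsCompleteSubalgebra S) : (⊤ : B) ∈ S := by
  have := h.2 ⊥ (CS.bot_mem h); simpa using this

lemma CS.sInf_mem (h : IsCompleteSubalgebra S) {T : Set B} (hT : T ⊆ S) :
    sInf T ∈ S := by
  have h1 : sSup (Compl.compl '' T) ∈ S :=
    h.1 _ (by rintro x ⟨t, ht, rfl⟩; exact h.2 t (hT ht))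
  have h2 := h.2 _ h1
  rwa [compl_sSup', compl_compl_image] at h2

lemma le_proj (b : B) : b ≤ proj S b := le_sInf fun _ ha => ha.2

lemma proj_mem (h : IsCompleteSubalgebra S) (b : B) : proj S b ∈ S :=
  CS.sInf_mem h (sep_subset _ _)

lemma proj_le {a : B} (ha : a ∈ S) {b : B} (hba : b ≤ a) : proj S b ≤ a :=
  sInf_le ⟨ha, hba⟩

lemma proj_mono (h : IsCompleteSubalgebra S) {b c : B} (hbc : b ≤ c) :
    proj S b ≤ proj S c :=
  proj_le (proj_mem h c) (hbc.trans (le_proj c))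

lemma proj_bot (h : IsCompleteSubalgebra S) : proj S (⊥ : B) = ⊥ :=
  le_antisymm (proj_le (CS.bot_mem h) le_rfl) bot_le

lemma proj_top (h : IsCompleteSubalgebra S) : proj S (⊤ : B) = ⊤ :=
  top_unique (le_proj ⊤)

lemma proj_ne_bot {b : B} (hb : b ≠ ⊥) : proj S b ≠ ⊥ :=
  fun hc => hb (le_bot_iff.1 (hc ▸ le_proj b))

lemma ne_bot_of_proj (h : IsCompleteSubalgebra S) {b : B}
    (hb : proj S b ≠ ⊥) : b ≠ ⊥ := by
  rintro rfl; exact hb (proj_bot h)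

lemma proj_iSup (h : IsCompleteSubalgebra S) {ι : Sort*} (f : ι → B) :
    proj S (⨆ i, f i) = ⨆ i, proj S (f i) := by
  apply le_antisymm
  · have hmem : (⨆ i, proj S (f i)) ∈ S := by
      have := h.1 (Set.range fun i => proj S (f i))
        (by rintro x ⟨i, rfl⟩; exact proj_mem h _)
      rwa [sSup_range] at this
    exact proj_le hmem
      (iSup_le fun i => (le_proj (f i)).trans (le_iSup (fun i => proj S (f i)) i))
  · exact iSup_le fun i => proj_mono h (le_iSup f i)

lemma Iso.mem (hφ : IsSubalgIso S₁ S₂ φ) {a : B} (ha : a ∈ S₁) : φ a ∈ S₂ :=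
  hφ.1 ▸ mem_image_of_mem φ ha

lemma Iso.bot (h₁ : IsCompleteSubalgebra S₁) (h₂ : IsCompleteSubalgebra S₂)
    (hφ : IsSubalgIso S₁ S₂ φ) : φ ⊥ = ⊥ := by
  have hb : (⊥ : B) ∈ S₂ := CS.bot_mem h₂
  rw [← hφ.1] at hb
  obtain ⟨u, hu, hub⟩ := hb
  have : φ ⊥ ≤ φ u := (hφ.2 ⊥ (CS.bot_mem h₁) u hu).2 bot_le
  rw [hub] at this
  exact le_bot_iff.1 this

lemma Iso.top (h₁ : IsCompleteSubalgebra S₁) (h₂ : IsCompleteSubalgebra S₂)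
    (hφ : IsSubalgIso S₁ S₂ φ) : φ ⊤ = ⊤ := by
  have hb : (⊤ : B) ∈ S₂ := CS.top_mem h₂
  rw [← hφ.1] at hb
  obtain ⟨u, hu, hub⟩ := hb
  have : φ u ≤ φ ⊤ := (hφ.2 u hu ⊤ (CS.top_mem h₁)).2 le_top
  rw [hub] at this
  exact top_unique this

lemma Iso.ne_bot (h₁ : IsCompleteSubalgebra S₁) (h₂ : IsCompleteSubalgebra S₂)
    (hφ : IsSubalgIso S₁ S₂ φ) {a : B} (ha : a ∈ S₁) (hne : a ≠ ⊥) : φ a ≠ ⊥ := by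
  intro hcon
  apply hne
  have : φ a ≤ φ ⊥ := by rw [hcon, Iso.bot h₁ h₂ hφ]
  exact le_bot_iff.1 ((hφ.2 a ha ⊥ (CS.bot_mem h₁)).1 this)

lemma Iso.iSup (h₁ : IsCompleteSubalgebra S₁) (h₂ : IsCompleteSubalgebra S₂)
    (hφ : IsSubalgIso S₁ S₂ φ) {ι : Sort*} (f : ι → B) (hf : ∀ i, f i ∈ S₁) :
    φ (⨆ i, f i) = ⨆ i, φ (f i) := by
  have hs : (⨆ i, f i) ∈ S₁ := by
    have := h₁.1 (Set.range f) (by rintro x ⟨i, rfl⟩; exact hf i)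
    rwa [sSup_range] at this
  apply le_antisymm
  · have hmem : (⨆ i, φ (f i)) ∈ S₂ := by
      have := h₂.1 (Set.range fun i => φ (f i))
        (by rintro x ⟨i, rfl⟩; exact Iso.mem hφ (hf i))
      rwa [sSup_range] at this
    rw [← hφ.1] at hmem
    obtain ⟨u, hu, huv⟩ := hmem
    rw [← huv]
    refine (hφ.2 _ hs u hu).2 (iSup_le fun i => ?_)
    exact (hφ.2 _ (hf i) u hu).1 (huv ▸ le_iSup (fun i => φ (f i)) i)
  · exact iSup_le fun i => (hφ.2 _ (hf i) _ hs).2 (le_iSup f i)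

end helper

/-- The maps `e₁(b) = (b,1)` and `e₂(b) = (1,b)` are complete embeddings of
(the nonzero part of) `B` into the amalgamation `Am(B,φ₀)`: they send nonzero
elements to conditions, preserve order, preserve compatibility and
incompatibility, and send maximal antichains to predense sets. -/
theorem amalgamation_complete_embeddings
    [CompleteBooleanAlgebra B] (S₁ S₂ : Set B)
    (hS₁ : IsCompleteSubalgebra S₁) (hS₂ : IsCompleteSubalgebra S₂)
    (φ : B → B) (hφ : IsSubalgIso S₁ S₂ φ) :
    let Am := Amal S₁ S₂ φ
    let e₁ : B → B × B := fun b => (b, ⊤)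
    let e₂ : B → B × B := fun b => (⊤, b)
    (∀ b : B, b ≠ ⊥ → e₁ b ∈ Am ∧ e₂ b ∈ Am) ∧
    (∀ b b' : B, b' ≤ b → e₁ b' ≤ e₁ b ∧ e₂ b' ≤ e₂ b) ∧
    (∀ b b' : B, b ≠ ⊥ → b' ≠ ⊥ →
      ((b ⊓ b' ≠ ⊥ ↔ AmalCompat Am (e₁ b) (e₁ b')) ∧
       (b ⊓ b' ≠ ⊥ ↔ AmalCompat Am (e₂ b) (e₂ b')))) ∧
    (∀ A : Set B, (∀ a ∈ A, a ≠ ⊥) →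
      (∀ a ∈ A, ∀ a' ∈ A, a ≠ a' → a ⊓ a' = ⊥) →
      (∀ b : B, b ≠ ⊥ → ∃ a ∈ A, a ⊓ b ≠ ⊥) →
      (∀ d ∈ Am, ∃ a ∈ A, AmalCompat Am d (e₁ a)) ∧
      (∀ d ∈ Am, ∃ a ∈ A, AmalCompat Am d (e₂ a))) := by
  intro Am e₁ e₂
  -- membership lemmas
  have hmem1 : ∀ b : B, b ≠ ⊥ → e₁ b ∈ Am := by
    intro b hb
    show φ (proj S₁ b) ⊓ proj S₂ (⊤ : B) ≠ ⊥
    rw [proj_top hS₂, inf_top_eq]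
    exact Iso.ne_bot hS₁ hS₂ hφ (proj_mem hS₁ b) (proj_ne_bot hb)
  have hmem2 : ∀ b : B, b ≠ ⊥ → e₂ b ∈ Am := by
    intro b hb
    show φ (proj S₁ (⊤ : B)) ⊓ proj S₂ b ≠ ⊥
    rw [proj_top hS₁, Iso.top hS₁ hS₂ hφ, top_inf_eq]
    exact proj_ne_bot hb
  refine ⟨fun b hb => ⟨hmem1 b hb, hmem2 b hb⟩, ?_, ?_, ?_⟩
  · exact fun b b' h => ⟨⟨h, le_rfl⟩, ⟨le_rfl, h⟩⟩
  · intro b b' hb hb'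
    constructor
    · constructor
      · intro h
        exact ⟨e₁ (b ⊓ b'), hmem1 _ h, ⟨inf_le_left, le_rfl⟩, ⟨inf_le_right, le_rfl⟩⟩
      · rintro ⟨⟨c₁, c₂⟩, hc, h1, h2⟩
        have hc₁ : c₁ ≠ ⊥ := by
          apply ne_bot_of_proj hS₁
          intro hcon
          apply hc
          show φ (proj S₁ c₁) ⊓ proj S₂ c₂ = ⊥
          rw [hcon, Iso.bot hS₁ hS₂ hφ, bot_inf_eq]
        intro hcon
        exact hc₁ (le_bot_iff.1 (hcon ▸ le_inf h1.1 h2.1))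
    · constructor
      · intro h
        exact ⟨e₂ (b ⊓ b'), hmem2 _ h, ⟨le_rfl, inf_le_left⟩, ⟨le_rfl, inf_le_right⟩⟩
      · rintro ⟨⟨c₁, c₂⟩, hc, h1, h2⟩
        have hc₂ : c₂ ≠ ⊥ := by
          apply ne_bot_of_proj hS₂
          intro hcon
          apply hc
          show φ (proj S₁ c₁) ⊓ proj S₂ c₂ = ⊥
          rw [hcon, inf_bot_eq]
        intro hcon
        exact hc₂ (le_bot_iff.1 (hcon ▸ le_inf h1.2 h2.2))
  · intro A _hA1 _hA2 hA3
    have hsup : sSup A = ⊤ := by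
      by_contra hne
      have hb : (sSup A)ᶜ ≠ ⊥ := by
        simpa [compl_eq_bot] using hne
      obtain ⟨a, haA, ha⟩ := hA3 _ hb
      exact ha (by
        have : a ≤ sSup A := le_sSup haA
        simpa [inf_compl_eq_bot] using
          le_bot_iff.1 (le_trans (inf_le_inf_right _ this) (by simp)))
    constructor
    · rintro ⟨d₁, d₂⟩ hd
      have hd' : φ (proj S₁ d₁) ⊓ proj S₂ d₂ ≠ ⊥ := hd
      have hd₁ : d₁ = ⨆ a : A, d₁ ⊓ (a : B) := by
        conv_lhs => rw [← inf_top_eq d₁, ← hsup, sSup_eq_iSup', inf_iSup_eq]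
      have key : φ (proj S₁ d₁) = ⨆ a : A, φ (proj S₁ (d₁ ⊓ (a : B))) := by
        conv_lhs => rw [hd₁]
        rw [proj_iSup hS₁, Iso.iSup hS₁ hS₂ hφ _ (fun a => proj_mem hS₁ _)]
      have hsplit : φ (proj S₁ d₁) ⊓ proj S₂ d₂
          = ⨆ a : A, φ (proj S₁ (d₁ ⊓ (a : B))) ⊓ proj S₂ d₂ := by
        rw [key, iSup_inf_eq]
      rw [hsplit] at hd'
      have : ∃ a : A, φ (proj S₁ (d₁ ⊓ (a : B))) ⊓ proj S₂ d₂ ≠ ⊥ := by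
        by_contra hcon
        push_neg at hcon
        exact hd' (by simp [hcon])
      obtain ⟨a, ha⟩ := this
      exact ⟨a, a.2, (d₁ ⊓ (a : B), d₂), ha, ⟨inf_le_left, le_rfl⟩,
        ⟨inf_le_right, le_top⟩⟩
    · rintro ⟨d₁, d₂⟩ hd
      have hd' : φ (proj S₁ d₁) ⊓ proj S₂ d₂ ≠ ⊥ := hd
      have hd₂ : d₂ = ⨆ a : A, d₂ ⊓ (a : B) := by
        conv_lhs => rw [← inf_top_eq d₂, ← hsup, sSup_eq_iSup', inf_iSup_eq]
      have key : proj S₂ d₂ = ⨆ a : A, proj S₂ (d₂ ⊓ (a : B)) := by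
        conv_lhs => rw [hd₂]
        rw [proj_iSup hS₂]
      have hsplit : φ (proj S₁ d₁) ⊓ proj S₂ d₂
          = ⨆ a : A, φ (proj S₁ d₁) ⊓ proj S₂ (d₂ ⊓ (a : B)) := by
        rw [key, inf_iSup_eq]
      rw [hsplit] at hd'
      have : ∃ a : A, φ (proj S₁ d₁) ⊓ proj S₂ (d₂ ⊓ (a : B)) ≠ ⊥ := by
        by_contra hcon
        push_neg at hcon
        exact hd' (by simp [hcon])
      obtain ⟨a, ha⟩ := this
      exact ⟨a, a.2, (d₁, d₂ ⊓ (a : B)), ha, ⟨le_rfl, inf_le_left⟩,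
        ⟨le_top, inf_le_right⟩⟩
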